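/- Fix integers d ≥ 2 and n ≥ 2, a target index ℓ ∈ Fin n, a control word w : Fin n → Option (Fin d) with w ℓ = none, a matrix V : Matrix (Fin d) (Fin d) ℂ, and digits b : Fin n → Fin d. Let T be the matrix on strings defined by T x y = 1 if x k = (y k) + (b k) for all k (addition mod d), and 0 otherwise (the tensor product of one-qudit increment gates ⊕ b_k), and let T' be defined likewise from −b (so T' = T⁻¹). Let ⊕(b ℓ) be the d × d matrix with entry 1 at positions (j + b ℓ, j) and 0 elsewhere, and ⊖(b ℓ) its inverse. Define the shifted control word w̃ by w̃ i = Option.map (fun v => v + b i) (w i). Then T * Λ(ℓ,w,V) * T' = Λ(ℓ, w̃, ⊕(b ℓ) * V * ⊖(b ℓ)). -/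
import Mathlib


/-- The controlled one-qudit gate `Λ(ℓ,w,V)`. -/
def ctrlGate (d n : ℕ) (ℓ : Fin n) (w : Fin n → Option (Fin d))
    (V : Matrix (Fin d) (Fin d) ℂ) :
    Matrix (Fin n → Fin d) (Fin n → Fin d) ℂ :=
  Matrix.of fun y x =>
    if ∀ i, i ≠ ℓ → y i = x i then
      (if ∀ i v, w i = some v → x i = v then V (y ℓ) (x ℓ)
       else if y ℓ = x ℓ then 1 else 0)
    else 0

/-- The tensor product of one-qudit modular-increment gates `⊕ bₖ`. -/
def shiftGate (d n : ℕ) (b : Fin n → Fin d) :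
    Matrix (Fin n → Fin d) (Fin n → Fin d) ℂ :=
  Matrix.of fun x y => if ∀ k, x k = y k + b k then 1 else 0

/-- The one-qudit modular increment `⊕ a`, with entry 1 at positions `(j+a, j)`. -/
def incMat (d : ℕ) (a : Fin d) : Matrix (Fin d) (Fin d) ℂ :=
  Matrix.of fun i j => if i = j + a then 1 else 0

/-- The similarity relation (eq:flip_plus): conjugating a controlled one-qudit
gate by local increments shifts the control word and conjugates the target
operation. -/
theorem flip_plus (d n : ℕ) (hd : 2 ≤ d) (hn : 2 ≤ n)
    (ℓ : Fin n) (w : Fin n → Option (Fin d)) (hwℓ : w ℓ = none)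
    (V : Matrix (Fin d) (Fin d) ℂ) (b : Fin n → Fin d) :
    shiftGate d n b * ctrlGate d n ℓ w V * shiftGate d n (fun k => -(b k)) =
      ctrlGate d n ℓ (fun i => Option.map (fun v => v + b i) (w i))
        (incMat d (b ℓ) * V * incMat d (-(b ℓ))) := by
  haveI : NeZero d := ⟨by omega⟩
  -- sum against a left shift
  have hsumL : ∀ (y : Fin n → Fin d) (f : (Fin n → Fin d) → ℂ),
      (∑ u, shiftGate d n b y u * f u)
        = f (fun k => y k - b k) := by
    intro y f
    simp only [shiftGate, Matrix.of_apply]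
    rw [Finset.sum_eq_single (fun k => y k - b k)]
    · rw [if_pos, one_mul]
      intro k; simp
    · intro u _ hu
      rw [if_neg, zero_mul]
      intro h
      exact hu (funext fun k => eq_sub_of_add_eq (h k).symm)
    · simp
  have hsumR : ∀ (x : Fin n → Fin d) (f : (Fin n → Fin d) → ℂ),
      (∑ v, f v * shiftGate d n (fun k => -(b k)) v x)
        = f (fun k => x k - b k) := by
    intro x f
    simp only [shiftGate, Matrix.of_apply]
    rw [Finset.sum_eq_single (fun k => x k - b k)]
    · rw [if_pos, mul_one]
      intro k; simp [sub_eq_add_neg]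
    · intro v _ hv
      rw [if_neg, mul_zero]
      intro h
      exact hv (funext fun k => by rw [h k, ← sub_eq_add_neg])
    · simp
  have hconj : ∀ i j : Fin d,
      (incMat d (b ℓ) * V * incMat d (-(b ℓ))) i j = V (i - b ℓ) (j - b ℓ) := by
    intro i j
    have h1 : ∀ j' : Fin d, (incMat d (b ℓ) * V) i j' = V (i - b ℓ) j' := by
      intro j'
      rw [Matrix.mul_apply]
      rw [Finset.sum_eq_single (i - b ℓ)]
      · rw [show incMat d (b ℓ) i (i - b ℓ) = 1 from if_pos (by simp), one_mul]
      · intro k _ hk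
        rw [show incMat d (b ℓ) i k = 0 from if_neg ?_, zero_mul]
        intro h
        exact hk (eq_sub_of_add_eq h.symm)
      · simp
    rw [Matrix.mul_apply]
    rw [Finset.sum_eq_single (j - b ℓ)]
    · rw [h1, show incMat d (-(b ℓ)) (j - b ℓ) j = 1 from if_pos (by simp [sub_eq_add_neg]), mul_one]
    · intro k _ hk
      rw [show incMat d (-(b ℓ)) k j = 0 from if_neg ?_, mul_zero]
      intro h
      exact hk (by rw [h, ← sub_eq_add_neg])
    · simp
  ext y x
  rw [Matrix.mul_apply,
    hsumR x (fun v => (shiftGate d n b * ctrlGate d n ℓ w V) y v),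
    Matrix.mul_apply,
    hsumL y (fun u => ctrlGate d n ℓ w V u (fun k => x k - b k))]
  simp only [ctrlGate, Matrix.of_apply, hconj]
  have hC1 : (∀ i, i ≠ ℓ → y i - b i = x i - b i) ↔ (∀ i, i ≠ ℓ → y i = x i) := by
    constructor <;> intro h i hi
    · exact sub_left_inj.mp (h i hi)
    · rw [h i hi]
  have hC2 : (∀ i v, w i = some v → x i - b i = v) ↔
      (∀ i v, Option.map (fun v => v + b i) (w i) = some v → x i = v) := by
    constructor <;> intro h i v hv
    · obtain ⟨a, ha, rfl⟩ := Option.map_eq_some_iff.mp hv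
      have := h i a ha
      rw [sub_eq_iff_eq_add] at this
      rw [this, add_comm]
    · have := h i (v + b i) (by rw [hv]; rfl)
      rw [this]; simp
  simp only [hC1, hC2, sub_left_inj]
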